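/- arXiv:2202.05569 — 5 statements merged into one kernel-verified Lean document; each statement's English description precedes it below -/
import Mathlib

section
/- Let a ∈ ℝ, u ∈ ℂ, b > 0, and set λ = a²·|u|²/b². Define M(λ) := ∑_{j=0}^∞ (Γ(j + 3/2)/Γ(3/2)) · λ^j/(j!)². Then ∫_{ℝ²} |a·u + b·(x + y·i)| · π⁻¹ · e^{−(x² + y²)} d(x, y) = (b·√π/2) · e^{−λ} · M(λ). -/
open MeasureTheory Real
open Set

lemma wallis_prod (j : ℕ) :
    (∏ i ∈ Finset.range j, (2 * (i:ℝ) + 1) / (2 * i + 2))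
      = (Nat.factorial (2*j) : ℝ) / (4^j * (Nat.factorial j : ℝ)^2) := by
  induction j with
  | zero => simp
  | succ k ih =>
    rw [Finset.prod_range_succ, ih]
    have h2 : ((Nat.factorial k : ℝ)) ≠ 0 := Nat.cast_ne_zero.mpr (Nat.factorial_ne_zero k)
    have hfk : ((Nat.factorial (k+1) : ℝ)) = (k+1) * Nat.factorial k := by
      rw [Nat.factorial_succ]; push_cast; ring
    have hfj : ((Nat.factorial (2*(k+1)) : ℝ))
        = (2*k+2) * ((2*k+1) * Nat.factorial (2*k)) := by
      rw [show 2*(k+1) = (2*k+1)+1 by ring, Nat.factorial_succ, Nat.factorial_succ]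
      push_cast; ring
    rw [hfk, hfj]
    field_simp
    ring

lemma int_cos_half (n : ℕ) :
    ∫ θ in (-π)..π, Real.cos θ ^ n
      = 2 * (1 + (-1:ℝ)^n) * ∫ θ in (0:ℝ)..(π/2), Real.cos θ ^ n := by
  have hc : ∀ a b : ℝ, IntervalIntegrable (fun θ : ℝ => Real.cos θ ^ n) volume a b :=
    fun a b => (Real.continuous_cos.pow n).intervalIntegrable a b
  have e1 : ∫ θ in (-π)..(0:ℝ), Real.cos θ ^ n = ∫ θ in (0:ℝ)..π, Real.cos θ ^ n := by
    have := intervalIntegral.integral_comp_neg (a := (0:ℝ)) (b := π)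
      (fun θ : ℝ => Real.cos θ ^ n)
    simpa [Real.cos_neg] using this.symm
  have e2 : ∫ θ in (π/2)..π, Real.cos θ ^ n
      = (-1:ℝ)^n * ∫ θ in (0:ℝ)..(π/2), Real.cos θ ^ n := by
    have := intervalIntegral.integral_comp_sub_left (a := (0:ℝ)) (b := π/2)
      (fun θ : ℝ => Real.cos θ ^ n) π
    have h : ∀ x : ℝ, Real.cos (π - x) ^ n = (-1:ℝ)^n * Real.cos x ^ n := by
      intro x; rw [Real.cos_pi_sub]; ring
    rw [show π - (π/2) = π/2 by ring, show π - (0:ℝ) = π by ring] at this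
    rw [← this]
    rw [intervalIntegral.integral_congr (g := fun x => (-1:ℝ)^n * Real.cos x ^ n)
      (fun x _ => h x), intervalIntegral.integral_const_mul]
  rw [← intervalIntegral.integral_add_adjacent_intervals (hc (-π) 0) (hc 0 π), e1,
    ← intervalIntegral.integral_add_adjacent_intervals (hc 0 (π/2)) (hc (π/2) π), e2]
  ring

lemma int_cos_even (j : ℕ) :
    ∫ θ in (-π)..π, Real.cos θ ^ (2*j)
      = 2 * π * ((Nat.factorial (2*j) : ℝ) / (4^j * (Nat.factorial j : ℝ)^2)) := by
  rw [int_cos_half, EulerSine.integral_cos_pow_eq, integral_sin_pow_even, wallis_prod]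
  rw [pow_mul]
  norm_num
  ring

lemma int_cos_odd (j : ℕ) :
    ∫ θ in (-π)..π, Real.cos θ ^ (2*j+1) = 0 := by
  rw [int_cos_half, pow_succ, pow_mul]
  norm_num

lemma fact_cast_pos (j : ℕ) : (0:ℝ) < (Nat.factorial j : ℝ) :=
  Nat.cast_pos.mpr (Nat.factorial_pos j)

lemma summable_aux (x : ℝ) :
    Summable (fun j : ℕ => x^(2*j) / ((Nat.factorial j : ℝ))^2) := by
  have h : ∀ j : ℕ, x^(2*j) / ((Nat.factorial j : ℝ))^2
      ≤ (x^2)^j / (Nat.factorial j : ℝ) := by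
    intro j
    rw [pow_mul]
    refine div_le_div_of_nonneg_left (pow_nonneg (sq_nonneg x) j) (fact_cast_pos j) ?_
    nlinarith [fact_cast_pos j, (Nat.one_le_cast (α := ℝ)).mpr (Nat.one_le_iff_ne_zero.mpr (Nat.factorial_ne_zero j))]
  refine Summable.of_nonneg_of_le (fun j => ?_) h (Real.summable_pow_div_factorial (x^2))
  rw [pow_mul]; positivity

/-- The modified Bessel integral. -/
lemma bessel_series (t : ℝ) :
    ∫ θ in (-π)..π, Real.exp (t * Real.cos θ)
      = ∑' j : ℕ, 2 * π * ((t/2)^(2*j) / ((Nat.factorial j : ℝ))^2) := by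
  have hpi : (-π : ℝ) ≤ π := by linarith [Real.pi_pos]
  have hexp : ∀ θ : ℝ, Real.exp (t * Real.cos θ)
      = ∑' n : ℕ, t^n * Real.cos θ ^ n / (Nat.factorial n : ℝ) := by
    intro θ
    rw [Real.exp_eq_exp_ℝ, NormedSpace.exp_eq_tsum_div]
    exact tsum_congr fun n => by rw [mul_pow]
  rw [intervalIntegral.integral_of_le hpi]
  calc ∫ θ in Ioc (-π) π, Real.exp (t * Real.cos θ)
      = ∫ θ in Ioc (-π) π, ∑' n : ℕ, t^n * Real.cos θ ^ n / (Nat.factorial n : ℝ) := by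
        exact setIntegral_congr_fun measurableSet_Ioc (fun θ _ => hexp θ)
    _ = ∑' n : ℕ, ∫ θ in Ioc (-π) π, t^n * Real.cos θ ^ n / (Nat.factorial n : ℝ) := by
        refine integral_tsum (fun n => ((continuous_const.mul
          (Real.continuous_cos.pow n)).div_const _).aestronglyMeasurable) ?_
        have hb : ∀ n : ℕ, ∫⁻ θ in Ioc (-π) π, ‖t^n * Real.cos θ ^ n / (Nat.factorial n : ℝ)‖₊
            ≤ ENNReal.ofReal (|t|^n / (Nat.factorial n : ℝ) * (2*π)) := by
          intro n
          have : ∀ θ : ℝ, (‖t^n * Real.cos θ ^ n / (Nat.factorial n : ℝ)‖₊ : ENNReal)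
              ≤ ENNReal.ofReal (|t|^n / (Nat.factorial n : ℝ)) := by
            intro θ
            rw [← ENNReal.ofReal_coe_nnreal, coe_nnnorm]
            refine ENNReal.ofReal_le_ofReal ?_
            rw [norm_div, norm_mul, norm_pow, norm_pow, Real.norm_eq_abs, Real.norm_eq_abs,
              Real.norm_eq_abs, abs_of_pos (fact_cast_pos n)]
            refine (div_le_div_iff_of_pos_right (fact_cast_pos n)).mpr ?_
            have hc : |Real.cos θ|^n ≤ 1 := pow_le_one₀ (abs_nonneg _) (Real.abs_cos_le_one θ)
            calc |t|^n * |Real.cos θ|^n ≤ |t|^n * 1 :=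
                  mul_le_mul_of_nonneg_left hc (pow_nonneg (abs_nonneg t) n)
              _ = |t|^n := mul_one _
          calc ∫⁻ θ in Ioc (-π) π, ‖t^n * Real.cos θ ^ n / (Nat.factorial n : ℝ)‖₊
              ≤ ∫⁻ _ in Ioc (-π) π, ENNReal.ofReal (|t|^n / (Nat.factorial n : ℝ)) :=
                lintegral_mono (fun θ => this θ)
            _ = ENNReal.ofReal (|t|^n / (Nat.factorial n : ℝ)) * volume (Ioc (-π) π) := by
                rw [setLIntegral_const]
            _ = ENNReal.ofReal (|t|^n / (Nat.factorial n : ℝ) * (2*π)) := by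
                rw [Real.volume_Ioc, ENNReal.ofReal_mul
                  (div_nonneg (pow_nonneg (abs_nonneg t) n) (fact_cast_pos n).le)]
                congr 2
                ring
        refine ne_top_of_le_ne_top ?_ (ENNReal.tsum_le_tsum hb)
        rw [← ENNReal.ofReal_tsum_of_nonneg (fun n => by positivity)
          (((Real.summable_pow_div_factorial |t|).mul_right (2*π)))]
        exact ENNReal.ofReal_ne_top
    _ = ∑' n : ℕ, (t^n / (Nat.factorial n : ℝ)) * ∫ θ in (-π)..π, Real.cos θ ^ n := by
        refine tsum_congr fun n => ?_
        rw [intervalIntegral.integral_of_le hpi, ← MeasureTheory.integral_const_mul]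
        exact setIntegral_congr_fun measurableSet_Ioc fun θ _ => by ring
    _ = ∑' j : ℕ, 2 * π * ((t/2)^(2*j) / ((Nat.factorial j : ℝ))^2) := by
        set f : ℕ → ℝ := fun n => (t^n / (Nat.factorial n : ℝ)) * ∫ θ in (-π)..π, Real.cos θ ^ n
          with hf
        have heven : ∀ j : ℕ, f (2*j) = 2 * π * ((t/2)^(2*j) / ((Nat.factorial j : ℝ))^2) := by
          intro j
          rw [hf]
          simp only [int_cos_even j]
          have h4 : ((t/2):ℝ)^(2*j) = (t^2)^j / 4^j := by
            rw [div_pow, pow_mul, pow_mul]; norm_num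
          rw [h4, pow_mul]
          have h1 : ((Nat.factorial (2*j) : ℝ)) ≠ 0 := (fact_cast_pos _).ne'
          have h2 : ((Nat.factorial j : ℝ)) ≠ 0 := (fact_cast_pos _).ne'
          have h3 : ((4:ℝ))^j ≠ 0 := by positivity
          field_simp
        have hodd : ∀ j : ℕ, f (2*j+1) = 0 := by
          intro j; rw [hf]; simp only [int_cos_odd j, mul_zero]
        have hse : Summable (fun j => f (2*j)) := by
          rw [funext heven]
          exact (summable_aux (t/2)).mul_left _
        have hso : Summable (fun j => f (2*j+1)) := by
          rw [funext hodd]; exact summable_zero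
        rw [← tsum_even_add_odd hse hso, funext hodd, tsum_zero, add_zero, funext heven]

lemma radial_integrable (j : ℕ) :
    IntegrableOn (fun r : ℝ => r^(2*j+2) * Real.exp (-r^2)) (Ioi 0) := by
  have h := integrableOn_rpow_mul_exp_neg_rpow (p := 2) (s := (2*j+2 : ℝ)) (by have : (0:ℝ) ≤ (j:ℝ) := Nat.cast_nonneg j; linarith) two_pos
  refine h.congr_fun (fun r hr => ?_) measurableSet_Ioi
  dsimp only
  rw [show ((2*j+2 : ℝ)) = ((2*j+2 : ℕ) : ℝ) by push_cast; ring,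
    Real.rpow_natCast, show ((2:ℝ)) = ((2:ℕ) : ℝ) by norm_num, Real.rpow_natCast]

lemma radial_value (j : ℕ) :
    ∫ r in Ioi (0:ℝ), r^(2*j+2) * Real.exp (-r^2)
      = Real.Gamma ((j:ℝ) + 3/2) / 2 := by
  have h := integral_rpow_mul_exp_neg_rpow (p := 2) (q := (2*j+2 : ℝ)) two_pos (by have : (0:ℝ) ≤ (j:ℝ) := Nat.cast_nonneg j; linarith)
  have he : ∫ r in Ioi (0:ℝ), r^(2*j+2) * Real.exp (-r^2)
      = ∫ r in Ioi (0:ℝ), r ^ ((2*j+2:ℝ)) * Real.exp (-r ^ (2:ℝ)) := by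
    refine setIntegral_congr_fun measurableSet_Ioi (fun r hr => ?_)
    rw [show ((2*j+2 : ℝ)) = ((2*j+2 : ℕ) : ℝ) by push_cast; ring,
      Real.rpow_natCast, show ((2:ℝ)) = ((2:ℕ) : ℝ) by norm_num, Real.rpow_natCast]
  rw [he, h, show ((2*j+2:ℝ)+1)/2 = (j:ℝ) + 3/2 by ring]
  ring

lemma Gamma_three_halves : Real.Gamma (3/2) = Real.sqrt π / 2 := by
  have := Real.Gamma_add_one (s := 1/2) (by norm_num)
  rw [show (1/2 : ℝ) + 1 = 3/2 by norm_num, Real.Gamma_one_half_eq] at this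
  rw [this]; ring

lemma Gamma_le_fact (j : ℕ) : Real.Gamma ((j:ℝ) + 3/2) ≤ (Nat.factorial (j+1) : ℝ) := by
  have hg : ((Nat.factorial (j+1) : ℝ)) = Real.Gamma ((j:ℝ) + 2) := by
    rw [show ((j:ℝ) + 2) = ((j+1 : ℕ) : ℝ) + 1 by push_cast; ring,
      Real.Gamma_nat_eq_factorial]
  rw [hg]
  rcases Nat.eq_zero_or_pos j with hj | hj
  · subst hj
    simp only [Nat.cast_zero, zero_add]
    calc Real.Gamma (3/2) ≤ 1 := Real.Gamma_three_div_two_lt_one.le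
      _ = Real.Gamma 2 := Real.Gamma_two.symm
    -- need (0:ℝ)+2 = 2
  · have hjj : (1:ℝ) ≤ (j:ℝ) := Nat.one_le_cast.mpr hj
    have h1 : (2:ℝ) ≤ (j:ℝ) + 3/2 := by linarith
    exact (Real.Gamma_strictMonoOn_Ici (mem_Ici.mpr h1)
      (mem_Ici.mpr (by linarith)) (by linarith)).le

lemma summable_main {l : ℝ} (hl : 0 ≤ l) :
    Summable (fun j : ℕ => Real.Gamma ((j:ℝ) + 3/2) * l^j / ((Nat.factorial j : ℝ))^2) := by
  refine Summable.of_nonneg_of_le (fun j => ?_) (fun j => ?_)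
    (Real.summable_pow_div_factorial (2*l))
  · have := Real.Gamma_pos_of_pos (show (0:ℝ) < (j:ℝ)+3/2 by positivity)
    positivity
  · have h1 : Real.Gamma ((j:ℝ) + 3/2) * l^j / ((Nat.factorial j : ℝ))^2
        ≤ (Nat.factorial (j+1) : ℝ) * l^j / ((Nat.factorial j : ℝ))^2 := by
      gcongr
      exact Gamma_le_fact j
    refine h1.trans ?_
    have h2 : ((Nat.factorial (j+1) : ℝ)) = (j+1) * (Nat.factorial j : ℝ) := by
      rw [Nat.factorial_succ]; push_cast; ring
    have h3 : ((j:ℝ)+1) ≤ 2^j := by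
      have := Nat.lt_two_pow_self (n := j)
      exact_mod_cast Nat.succ_le_of_lt this
    have hf := fact_cast_pos j
    rw [h2]
    calc (j+1) * (Nat.factorial j : ℝ) * l^j / ((Nat.factorial j : ℝ))^2
        = ((j:ℝ)+1) * l^j / (Nat.factorial j : ℝ) := by field_simp
      _ ≤ (2*l)^j / (Nat.factorial j : ℝ) := by
          rw [mul_pow]
          gcongr

lemma keyJ (s φ : ℝ) (hs : 0 ≤ s) :
    ∫ p in (Ioi (0:ℝ)) ×ˢ (Ioo (-π) π),
        (p.1^2 * Real.exp (-p.1^2) * Real.exp (2*p.1*s*Real.cos (p.2-φ)))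
      = π * ∑' j : ℕ, Real.Gamma ((j:ℝ)+3/2) * (s^2)^j / ((Nat.factorial j : ℝ))^2 := by
  have hpi : (-π : ℝ) ≤ π := by linarith [Real.pi_pos]
  set g : ℝ × ℝ → ℝ :=
    fun p => p.1^2 * Real.exp (-p.1^2) * Real.exp (2*p.1*s*Real.cos (p.2-φ)) with hg
  have hgc : Continuous g := by
    apply Continuous.mul
    · exact (continuous_fst.pow 2).mul ((continuous_fst.pow 2).neg.rexp)
    · exact (((continuous_const.mul continuous_fst).mul continuous_const).mul
        (Real.continuous_cos.comp (continuous_snd.sub continuous_const))).rexp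
  have hgnn : ∀ p : ℝ × ℝ, 0 ≤ g p := fun p => by
    have := Real.exp_pos (-p.1^2); have := Real.exp_pos (2*p.1*s*Real.cos (p.2-φ)); positivity
  -- the θ-integral
  have hBval : ∀ r : ℝ, ∫ θ in Ioo (-π) π, g (r, θ)
      = ∑' j : ℕ, (2*π*s^(2*j)/((Nat.factorial j:ℝ))^2) * (r^(2*j+2) * Real.exp (-r^2)) := by
    intro r
    have h1 : ∫ θ in Ioo (-π) π, g (r, θ)
        = r^2 * Real.exp (-r^2) * ∫ θ in Ioo (-π) π, Real.exp (2*r*s*Real.cos (θ-φ)) := by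
      rw [← MeasureTheory.integral_const_mul]
    have h2 : ∫ θ in Ioo (-π) π, Real.exp (2*r*s*Real.cos (θ-φ))
        = ∫ θ in (-π)..π, Real.exp (2*r*s*Real.cos (θ-φ)) := by
      rw [intervalIntegral.integral_of_le hpi, MeasureTheory.integral_Ioc_eq_integral_Ioo]
    have h3 : ∫ θ in (-π)..π, Real.exp (2*r*s*Real.cos (θ-φ))
        = ∫ θ in (-π-φ)..(π-φ), Real.exp (2*r*s*Real.cos θ) :=
      intervalIntegral.integral_comp_sub_right (fun θ => Real.exp (2*r*s*Real.cos θ)) φ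
    have hper : Function.Periodic (fun θ : ℝ => Real.exp (2*r*s*Real.cos θ)) (2*π) := by
      intro x; simp [Real.cos_add_two_pi]
    have h4 : ∫ θ in (-π-φ)..(π-φ), Real.exp (2*r*s*Real.cos θ)
        = ∫ θ in (-π)..π, Real.exp (2*r*s*Real.cos θ) := by
      have := hper.intervalIntegral_add_eq (-π-φ) (-π)
      rw [show -π-φ+2*π = π-φ by ring, show -π+2*π = π by ring] at this
      exact this
    rw [h1, h2, h3, h4, bessel_series, ← tsum_mul_left]
    refine tsum_congr fun j => ?_
    have he : (2*r*s/2)^(2*j) = r^(2*j)*s^(2*j) := by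
      rw [show 2*r*s/2 = r*s by ring, mul_pow]
    rw [he]
    ring
  -- summability of the θ-series for each r
  have hsumB : ∀ r : ℝ, Summable (fun j : ℕ =>
      (2*π*s^(2*j)/((Nat.factorial j:ℝ))^2) * (r^(2*j+2) * Real.exp (-r^2))) := by
    intro r
    have : (fun j : ℕ => (2*π*s^(2*j)/((Nat.factorial j:ℝ))^2) * (r^(2*j+2) * Real.exp (-r^2)))
        = fun j : ℕ => (2*π*r^2*Real.exp (-r^2)) * ((r*s)^(2*j) / ((Nat.factorial j:ℝ))^2) := by
      funext j
      rw [mul_pow, pow_add]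
      ring
    rw [this]
    exact (summable_aux (r*s)).mul_left _
  have hnnB : ∀ j : ℕ, ∀ r : ℝ,
      0 ≤ (2*π*s^(2*j)/((Nat.factorial j:ℝ))^2) * (r^(2*j+2) * Real.exp (-r^2)) := by
    intro j r
    have h1 : (0:ℝ) < π := Real.pi_pos
    have h2 : (0:ℝ) < (Nat.factorial j : ℝ) := Nat.cast_pos.mpr (Nat.factorial_pos j)
    have h3 : (0:ℝ) ≤ s^(2*j) := by rw [pow_mul]; positivity
    have h4 : (0:ℝ) ≤ r^(2*j+2) := by rw [show 2*j+2 = 2*(j+1) by ring, pow_mul]; positivity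
    have h5 := (Real.exp_pos (-r^2)).le
    positivity
  -- main computation
  rw [MeasureTheory.integral_eq_lintegral_of_nonneg_ae (Filter.Eventually.of_forall fun p => hgnn p)
    hgc.aestronglyMeasurable.restrict]
  rw [Measure.volume_eq_prod, ← Measure.prod_restrict,
    MeasureTheory.lintegral_prod (fun p => ENNReal.ofReal (g p)) hgc.measurable.ennreal_ofReal.aemeasurable]
  have hinner : ∀ r : ℝ, ∫⁻ θ in Ioo (-π) π, ENNReal.ofReal (g (r, θ))
      = ENNReal.ofReal (∫ θ in Ioo (-π) π, g (r, θ)) := by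
    intro r
    refine (MeasureTheory.ofReal_integral_eq_lintegral_ofReal ?_
      (Filter.Eventually.of_forall fun θ => hgnn (r, θ))).symm
    have hc : Continuous fun θ : ℝ => g (r, θ) := hgc.comp (Continuous.prodMk_right r)
    exact (hc.integrableOn_Icc).mono_set Ioo_subset_Icc_self
  calc (∫⁻ r in Ioi (0:ℝ), ∫⁻ θ in Ioo (-π) π, ENNReal.ofReal (g (r, θ))).toReal
      = (∫⁻ r in Ioi (0:ℝ), ∑' j : ℕ, ENNReal.ofReal
          ((2*π*s^(2*j)/((Nat.factorial j:ℝ))^2) * (r^(2*j+2) * Real.exp (-r^2)))).toReal := by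
        congr 1
        refine lintegral_congr fun r => ?_
        rw [hinner r, hBval r,
          ENNReal.ofReal_tsum_of_nonneg (fun j => hnnB j r) (hsumB r)]
    _ = (∑' j : ℕ, ∫⁻ r in Ioi (0:ℝ), ENNReal.ofReal
          ((2*π*s^(2*j)/((Nat.factorial j:ℝ))^2) * (r^(2*j+2) * Real.exp (-r^2)))).toReal := by
        congr 1
        refine lintegral_tsum fun j => ?_
        refine (Measurable.ennreal_ofReal ?_).aemeasurable
        exact (measurable_const.mul ((measurable_id.pow_const _).mul
          ((measurable_id.pow_const 2).neg.exp)))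
    _ = (∑' j : ℕ, ENNReal.ofReal
          (π * (Real.Gamma ((j:ℝ)+3/2) * (s^2)^j / ((Nat.factorial j : ℝ))^2))).toReal := by
        congr 1
        refine tsum_congr fun j => ?_
        have hInt : IntegrableOn (fun r : ℝ =>
            (2*π*s^(2*j)/((Nat.factorial j:ℝ))^2) * (r^(2*j+2) * Real.exp (-r^2))) (Ioi 0) :=
          (radial_integrable j).const_mul _
        rw [← MeasureTheory.ofReal_integral_eq_lintegral_ofReal hInt
          (Filter.Eventually.of_forall fun r => hnnB j r)]
        rw [MeasureTheory.integral_const_mul, radial_value j]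
        congr 1
        have h2 : ((Nat.factorial j : ℝ)) ≠ 0 :=
          (Nat.cast_pos.mpr (Nat.factorial_pos j)).ne'
        rw [show (s^2)^j = s^(2*j) by rw [pow_mul]]
        field_simp
    _ = π * ∑' j : ℕ, Real.Gamma ((j:ℝ)+3/2) * (s^2)^j / ((Nat.factorial j : ℝ))^2 := by
        rw [← ENNReal.ofReal_tsum_of_nonneg (fun j => ?_) ((summable_main (sq_nonneg s)).mul_left π)]
        · rw [ENNReal.toReal_ofReal]
          · exact tsum_mul_left
          · refine tsum_nonneg fun j => ?_
            have := Real.Gamma_pos_of_pos (show (0:ℝ) < (j:ℝ)+3/2 by positivity)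
            have h3 : (0:ℝ) ≤ (s^2)^j := by positivity
            positivity
        · have := Real.Gamma_pos_of_pos (show (0:ℝ) < (j:ℝ)+3/2 by positivity)
          have h3 : (0:ℝ) ≤ (s^2)^j := by positivity
          positivity

/-- The confluent hypergeometric series `₁F₁(3/2; 1; λ)` written out as
`∑_{j≥0} (Γ(j+3/2)/Γ(3/2)) · λ^j / (j!)²`. -/
noncomputable def hyperM (l : ℝ) : ℝ :=
  ∑' j : ℕ, (Real.Gamma ((j : ℝ) + 3 / 2) / Real.Gamma (3 / 2)) * l ^ j
    / ((Nat.factorial j : ℝ)) ^ 2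

/-- Eq. (48) of the paper: the first absolute moment of a Rician magnitude.
If `v` is a standard complex Gaussian (density `π⁻¹·e^{−(x²+y²)}` on `ℝ²`), then
`E|a·u + b·v| = (b·√π/2)·e^{−λ}·₁F₁(3/2;1;λ)` with `λ = a²|u|²/b²`. -/
theorem rician_first_moment (a : ℝ) (u : ℂ) (b : ℝ) (hb : 0 < b) :
    ∫ p : ℝ × ℝ,
        ‖(a : ℂ) * u + (b : ℂ) * ((p.1 : ℂ) + (p.2 : ℂ) * Complex.I)‖
          * (π⁻¹ * Real.exp (-(p.1 ^ 2 + p.2 ^ 2)))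
      = (b * Real.sqrt π / 2) * Real.exp (-(a ^ 2 * ‖u‖ ^ 2 / b ^ 2))
          * hyperM (a ^ 2 * ‖u‖ ^ 2 / b ^ 2) := by
  have hb' : (b:ℂ) ≠ 0 := by exact_mod_cast hb.ne'
  set w : ℂ := (↑a * u) / ↑b with hw
  set s : ℝ := ‖w‖ with hsdef
  set φ : ℝ := w.arg with hφdef
  set l : ℝ := a ^ 2 * ‖u‖ ^ 2 / b ^ 2 with hldef
  have hls : l = s^2 := by
    rw [hsdef, hw, norm_div, norm_mul, Complex.norm_real, Complex.norm_real, Real.norm_eq_abs, Real.norm_eq_abs, hldef]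
    rw [div_pow, mul_pow, sq_abs, sq_abs]
  have hlw : Complex.normSq w = l := by rw [hls, ← Complex.sq_norm]
  -- Step A : move to ℂ
  have stepA : (∫ p : ℝ × ℝ,
        ‖(a : ℂ) * u + (b : ℂ) * ((p.1 : ℂ) + (p.2 : ℂ) * Complex.I)‖
          * (π⁻¹ * Real.exp (-(p.1 ^ 2 + p.2 ^ 2))))
      = ∫ z : ℂ, ‖(a : ℂ) * u + (b : ℂ) * z‖
          * (π⁻¹ * Real.exp (-Complex.normSq z)) := by
    rw [← MeasurePreserving.integral_comp Complex.volume_preserving_equiv_real_prod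
      Complex.measurableEquivRealProd.measurableEmbedding
      (fun p : ℝ × ℝ => ‖(a : ℂ) * u + (b : ℂ) * ((p.1 : ℂ) + (p.2 : ℂ) * Complex.I)‖
          * (π⁻¹ * Real.exp (-(p.1 ^ 2 + p.2 ^ 2))))]
    refine integral_congr_ae (Filter.Eventually.of_forall fun z => ?_)
    simp only [Complex.measurableEquivRealProd_apply]
    rw [Complex.re_add_im]
    congr 2
    rw [Complex.normSq_apply]
    ring
  -- Step B : translation
  have stepB : (∫ z : ℂ, ‖(a : ℂ) * u + (b : ℂ) * z‖
          * (π⁻¹ * Real.exp (-Complex.normSq z)))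
      = (b * π⁻¹ * Real.exp (-l)) * ∫ z : ℂ, ‖z‖
          * Real.exp (-Complex.normSq z + 2*(z * (starRingEnd ℂ) w).re) := by
    rw [← integral_add_right_eq_self (fun z : ℂ => ‖(a : ℂ) * u + (b : ℂ) * z‖
          * (π⁻¹ * Real.exp (-Complex.normSq z))) (-w)]
    rw [← MeasureTheory.integral_const_mul]
    refine integral_congr_ae (Filter.Eventually.of_forall fun z => ?_)
    simp only
    have h1 : (a : ℂ) * u + (b : ℂ) * (z + -w) = ↑b * z := by
      rw [hw]; field_simp; ring
    rw [h1, norm_mul, Complex.norm_real, Real.norm_eq_abs, abs_of_pos hb]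
    have h2 : Complex.normSq (z + -w) = Complex.normSq z + l - 2*(z * (starRingEnd ℂ) w).re := by
      rw [← sub_eq_add_neg, Complex.normSq_sub, hlw]
    rw [h2]
    rw [show -(Complex.normSq z + l - 2*(z * (starRingEnd ℂ) w).re)
        = (-l) + (-Complex.normSq z + 2*(z * (starRingEnd ℂ) w).re) by ring, Real.exp_add]
    ring
  -- re identity
  have re_aux : ∀ θ : ℝ, (Complex.exp (↑θ * Complex.I) * (starRingEnd ℂ) w).re
      = s * Real.cos (θ - φ) := by
    intro θ
    conv_lhs => rw [show w = ↑s * Complex.exp (↑φ * Complex.I) from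
      (Complex.norm_mul_exp_arg_mul_I w).symm]
    rw [map_mul, Complex.conj_ofReal, ← Complex.exp_conj]
    have h3 : (starRingEnd ℂ) (↑φ * Complex.I) = ↑(-φ) * Complex.I := by
      rw [map_mul, Complex.conj_ofReal, Complex.conj_I]; push_cast; ring
    rw [h3, mul_comm (↑s : ℂ), ← mul_assoc, ← Complex.exp_add,
      show (↑θ * Complex.I + ↑(-φ) * Complex.I) = ↑(θ - φ) * Complex.I by push_cast; ring]
    rw [mul_comm, Complex.re_ofReal_mul, Complex.exp_ofReal_mul_I_re]
  -- polar coordinate expression of the symm map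
  have symm_eq : ∀ p : ℝ × ℝ, Complex.polarCoord.symm p
      = ↑p.1 * Complex.exp (↑p.2 * Complex.I) := by
    intro p
    rw [Complex.polarCoord_symm_apply, Complex.exp_mul_I]
    push_cast
    ring
  -- Step C : polar coordinates
  have stepC : (∫ z : ℂ, ‖z‖
        * Real.exp (-Complex.normSq z + 2*(z * (starRingEnd ℂ) w).re))
      = ∫ p in (Ioi (0:ℝ)) ×ˢ (Ioo (-π) π),
          (p.1^2 * Real.exp (-p.1^2) * Real.exp (2*p.1*s*Real.cos (p.2-φ))) := by
    rw [← Complex.integral_comp_polarCoord_symm (fun z => ‖z‖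
        * Real.exp (-Complex.normSq z + 2*(z * (starRingEnd ℂ) w).re))]
    rw [show polarCoord.target = (Ioi (0:ℝ)) ×ˢ (Ioo (-π) π) from rfl]
    refine setIntegral_congr_fun (measurableSet_Ioi.prod measurableSet_Ioo) fun p hp => ?_
    obtain ⟨hp1, hp2⟩ := hp
    rw [symm_eq p]
    have habs : ‖↑p.1 * Complex.exp (↑p.2 * Complex.I)‖ = p.1 := by
      rw [norm_mul, Complex.norm_real, Real.norm_eq_abs, Complex.norm_exp_ofReal_mul_I, mul_one,
        abs_of_pos (mem_Ioi.mp hp1)]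
    have hnsq : Complex.normSq (↑p.1 * Complex.exp (↑p.2 * Complex.I)) = p.1^2 := by
      rw [← Complex.sq_norm, habs]
    have hre : ((↑p.1 * Complex.exp (↑p.2 * Complex.I)) * (starRingEnd ℂ) w).re
        = p.1 * (s * Real.cos (p.2 - φ)) := by
      rw [mul_assoc, Complex.re_ofReal_mul, re_aux p.2]
    rw [smul_eq_mul, habs, hnsq, hre, Real.exp_add]
    ring
  -- assemble
  rw [stepA, stepB, stepC, keyJ s φ (norm_nonneg w)]
  have hM : hyperM l = (Real.Gamma (3/2))⁻¹
      * ∑' j : ℕ, Real.Gamma ((j:ℝ)+3/2) * (s^2)^j / ((Nat.factorial j : ℝ))^2 := by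
    rw [hyperM, ← tsum_mul_left]
    refine tsum_congr fun j => ?_
    rw [hls]
    ring
  rw [hM, Gamma_three_halves]
  have hπ : (π:ℝ) ≠ 0 := Real.pi_ne_zero
  have hsq : Real.sqrt π ≠ 0 := by
    refine ne_of_gt (Real.sqrt_pos.mpr Real.pi_pos)
  field_simp
  ring_nf
  exact tsum_congr fun j => by ring
end

section
/- Let R > 0 and h > 0, and define g : [0, R] → ℝ by g(r) := 1 + (r² − R·r + h²)/√((r² + h²)·((R − r)² + h²)). Then g is strictly decreasing on [0, R/2] and strictly increasing on [R/2, R]. -/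
open Real

lemma phi_strictMono (c : ℝ) (hc : 0 < c) :
    StrictMono (fun u : ℝ => u / Real.sqrt (u ^ 2 + c)) := by
  intro u v huv
  have hu : 0 < u ^ 2 + c := by positivity
  have hv : 0 < v ^ 2 + c := by positivity
  have hsu : 0 < Real.sqrt (u ^ 2 + c) := Real.sqrt_pos.2 hu
  have hsv : 0 < Real.sqrt (v ^ 2 + c) := Real.sqrt_pos.2 hv
  have hsu2 : Real.sqrt (u ^ 2 + c) ^ 2 = u ^ 2 + c := Real.sq_sqrt hu.le
  have hsv2 : Real.sqrt (v ^ 2 + c) ^ 2 = v ^ 2 + c := Real.sq_sqrt hv.le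
  simp only
  rw [div_lt_div_iff₀ hsu hsv]
  rcases le_or_gt 0 u with h0 | h0
  · have hsq : (u * Real.sqrt (v ^ 2 + c)) ^ 2 < (v * Real.sqrt (u ^ 2 + c)) ^ 2 := by
      nlinarith [mul_pos (sub_pos.2 huv) hc]
    exact lt_of_pow_lt_pow_left₀ 2 (mul_pos (h0.trans_lt huv) hsu).le hsq
  · rcases le_or_gt v 0 with h1 | h1
    · have hsq : (-(v * Real.sqrt (u ^ 2 + c))) ^ 2 < (-(u * Real.sqrt (v ^ 2 + c))) ^ 2 := by
        nlinarith [mul_pos (sub_pos.2 huv) hc, mul_pos (sub_pos.2 huv) (by linarith : (0:ℝ) < -(u + v))]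
      have := lt_of_pow_lt_pow_left₀ 2
        (by nlinarith [hsu.le, hsv.le] : (0:ℝ) ≤ -(u * Real.sqrt (v ^ 2 + c))) hsq
      linarith
    · have h2 : u * Real.sqrt (v ^ 2 + c) < 0 := mul_neg_of_neg_of_pos h0 hsv
      have h3 : 0 < v * Real.sqrt (u ^ 2 + c) := mul_pos h1 hsu
      linarith

lemma g_rewrite (R h r : ℝ) :
    1 + (r ^ 2 - R * r + h ^ 2) / Real.sqrt ((r ^ 2 + h ^ 2) * ((R - r) ^ 2 + h ^ 2))
      = 1 + (h ^ 2 - r * (R - r)) / Real.sqrt ((h ^ 2 - r * (R - r)) ^ 2 + h ^ 2 * R ^ 2) := by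
  have h1 : (r ^ 2 + h ^ 2) * ((R - r) ^ 2 + h ^ 2)
      = (h ^ 2 - r * (R - r)) ^ 2 + h ^ 2 * R ^ 2 := by ring
  have h2 : r ^ 2 - R * r + h ^ 2 = h ^ 2 - r * (R - r) := by ring
  rw [h1, h2]

/-- Monotonicity in `r` of the rotation-optimized angular factor
`g(r) = 1 + (r² − R·r + h²)/√((r²+h²)·((R−r)²+h²))` (Appendix C, eq. (52)):
`g` is strictly decreasing on `[0, R/2]` and strictly increasing on `[R/2, R]`. -/
theorem angular_factor_r_monotonicity (R h : ℝ) (hR : 0 < R) (hh : 0 < h) :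
    StrictAntiOn
        (fun r : ℝ => 1 + (r ^ 2 - R * r + h ^ 2)
          / Real.sqrt ((r ^ 2 + h ^ 2) * ((R - r) ^ 2 + h ^ 2)))
        (Set.Icc 0 (R / 2))
      ∧ StrictMonoOn
        (fun r : ℝ => 1 + (r ^ 2 - R * r + h ^ 2)
          / Real.sqrt ((r ^ 2 + h ^ 2) * ((R - r) ^ 2 + h ^ 2)))
        (Set.Icc (R / 2) R) := by
  have hc : 0 < h ^ 2 * R ^ 2 := by positivity
  constructor
  · intro a ha b hb hab
    simp only [g_rewrite R h]
    have hkey : h ^ 2 - b * (R - b) < h ^ 2 - a * (R - a) := by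
      have h3 : 0 < (b - a) * (R - a - b) :=
        mul_pos (by linarith) (by
          have := hb.2; linarith)
      nlinarith
    have := phi_strictMono (h ^ 2 * R ^ 2) hc hkey
    simpa using add_lt_add_left this 1
  · intro a ha b hb hab
    simp only [g_rewrite R h]
    have hkey : h ^ 2 - a * (R - a) < h ^ 2 - b * (R - b) := by
      have h3 : 0 < (b - a) * (a + b - R) :=
        mul_pos (by linarith) (by
          have := ha.1; linarith)
      nlinarith
    have := phi_strictMono (h ^ 2 * R ^ 2) hc hkey
    simpa using add_lt_add_left this 1
end

section
/- Let R > 0 and h > 0 with R > 2h, and set r₁ = (R − √(R² − 4h²))/2. Define ν : [0, R] → ℝ by ν(r) := 1/((r² + h²)·((R − r)² + h²)). Then ν is strictly increasing on [0, r₁] and strictly decreasing on [r₁, R/2]. -/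
open Real

private lemma pathloss_hasDerivAt (R h x : ℝ) :
    HasDerivAt (fun r : ℝ => (r ^ 2 + h ^ 2) * ((R - r) ^ 2 + h ^ 2))
      (-2 * (R - 2 * x) * (x ^ 2 - R * x + h ^ 2)) x := by
  have h1 : HasDerivAt (fun r : ℝ => r ^ 2 + h ^ 2) (2 * x) x := by
    simpa using ((hasDerivAt_pow 2 x).add_const (h ^ 2))
  have h0 : HasDerivAt (fun r : ℝ => R - r) (-1) x := by
    simpa using (hasDerivAt_id x).const_sub R
  have h2 : HasDerivAt (fun r : ℝ => (R - r) ^ 2 + h ^ 2)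
      (2 * (R - x) ^ 1 * (-1)) x := ((h0.pow 2).add_const (h ^ 2))
  have h3 : HasDerivAt (fun r : ℝ => (r ^ 2 + h ^ 2) * ((R - r) ^ 2 + h ^ 2))
      (2 * x * ((R - x) ^ 2 + h ^ 2) + (x ^ 2 + h ^ 2) * (2 * (R - x) ^ 1 * (-1))) x := h1.mul h2
  convert h3 using 1
  ring

/-- Monotonicity in `r` of the path-loss factor
`ν(r) = 1/((r²+h²)·((R−r)²+h²))` in the low-altitude regime `R > 2h`
(Appendix C, eq. (53)): with `r₁ = (R − √(R² − 4h²))/2`, `ν` is strictly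
increasing on `[0, r₁]` and strictly decreasing on `[r₁, R/2]`. -/
theorem pathloss_factor_r_monotonicity (R h : ℝ) (hR : 0 < R) (hh : 0 < h)
    (hRh : 2 * h < R) :
    StrictMonoOn
        (fun r : ℝ => 1 / ((r ^ 2 + h ^ 2) * ((R - r) ^ 2 + h ^ 2)))
        (Set.Icc 0 ((R - Real.sqrt (R ^ 2 - 4 * h ^ 2)) / 2))
      ∧ StrictAntiOn
        (fun r : ℝ => 1 / ((r ^ 2 + h ^ 2) * ((R - r) ^ 2 + h ^ 2)))
        (Set.Icc ((R - Real.sqrt (R ^ 2 - 4 * h ^ 2)) / 2) (R / 2)) := by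
  set s := Real.sqrt (R ^ 2 - 4 * h ^ 2) with hs
  have hdisc : 0 < R ^ 2 - 4 * h ^ 2 := by nlinarith
  have hs2 : s ^ 2 = R ^ 2 - 4 * h ^ 2 := Real.sq_sqrt hdisc.le
  have hspos : 0 < s := Real.sqrt_pos.mpr hdisc
  have hsR : s < R := by nlinarith
  set f : ℝ → ℝ := fun r : ℝ => (r ^ 2 + h ^ 2) * ((R - r) ^ 2 + h ^ 2) with hf
  have fpos : ∀ x : ℝ, 0 < f x := fun x => by
    have := hh; positivity
  have fcont : Continuous f := by fun_prop
  -- f strictly decreasing on [0, r₁]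
  have fanti : StrictAntiOn f (Set.Icc 0 ((R - s) / 2)) := by
    apply strictAntiOn_of_deriv_neg (convex_Icc _ _) fcont.continuousOn
    intro x hx
    rw [interior_Icc] at hx
    rw [(pathloss_hasDerivAt R h x).deriv]
    have hc : 0 < R - 2 * x := by have := hx.2; linarith
    have ha : 0 < (R - s) / 2 - x := by linarith [hx.2]
    have hb : 0 < (R + s) / 2 - x := by linarith [hx.2]
    have hq : 0 < x ^ 2 - R * x + h ^ 2 := by nlinarith [mul_pos ha hb]
    nlinarith [mul_pos hc hq]
  -- f strictly increasing on [r₁, R/2]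
  have fmono : StrictMonoOn f (Set.Icc ((R - s) / 2) (R / 2)) := by
    apply strictMonoOn_of_deriv_pos (convex_Icc _ _) fcont.continuousOn
    intro x hx
    rw [interior_Icc] at hx
    rw [(pathloss_hasDerivAt R h x).deriv]
    have hc : 0 < R - 2 * x := by have := hx.2; linarith
    have ha : 0 < x - (R - s) / 2 := by linarith [hx.1]
    have hb : 0 < (R + s) / 2 - x := by linarith [hx.2]
    have hq : x ^ 2 - R * x + h ^ 2 < 0 := by nlinarith [mul_pos ha hb]
    nlinarith [mul_pos hc (neg_pos.mpr hq)]
  constructor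
  · intro x hx y hy hxy
    have hlt : f y < f x := fanti hx hy hxy
    exact one_div_lt_one_div_of_lt (fpos y) hlt
  · intro x hx y hy hxy
    have hlt : f x < f y := fmono hx hy hxy
    exact one_div_lt_one_div_of_lt (fpos x) hlt
end

section
/- Let R > 0 and 0 ≤ r ≤ R. Then the map h ↦ 1 + (r² − R·r + h²)/√((r² + h²)·((R − r)² + h²)) is strictly increasing on (0, ∞). -/
open Real

/-- h-monotonicity of the angular factor (eq. (33) of the paper): for fixed
`r ∈ [0, R]`, the map `h ↦ 1 + (r² − R·r + h²)/√((r²+h²)·((R−r)²+h²))` is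
strictly increasing on `(0, ∞)`. -/
theorem angular_factor_h_monotone (R r : ℝ) (hR : 0 < R) (hr0 : 0 ≤ r) (hrR : r ≤ R) :
    StrictMonoOn
      (fun h : ℝ => 1 + (r ^ 2 - R * r + h ^ 2)
        / Real.sqrt ((r ^ 2 + h ^ 2) * ((R - r) ^ 2 + h ^ 2)))
      (Set.Ioi 0) := by
  apply strictMonoOn_of_deriv_pos (convex_Ioi 0)
  · apply ContinuousOn.add continuousOn_const
    apply ContinuousOn.div (by fun_prop) (by fun_prop)
    intro h hh
    have hh' : (0:ℝ) < h := hh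
    have : (0:ℝ) < Real.sqrt ((r ^ 2 + h ^ 2) * ((R - r) ^ 2 + h ^ 2)) := by positivity
    exact ne_of_gt this
  · intro h hh
    rw [interior_Ioi] at hh
    have hpos : (0:ℝ) < h := hh
    have hPpos : (0:ℝ) < r ^ 2 + h ^ 2 := by positivity
    have hQpos : (0:ℝ) < (R - r) ^ 2 + h ^ 2 := by positivity
    have hu : (0:ℝ) < (r ^ 2 + h ^ 2) * ((R - r) ^ 2 + h ^ 2) := mul_pos hPpos hQpos
    have hs : (0:ℝ) < Real.sqrt ((r ^ 2 + h ^ 2) * ((R - r) ^ 2 + h ^ 2)) := Real.sqrt_pos.2 hu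
    have hs2 : Real.sqrt ((r ^ 2 + h ^ 2) * ((R - r) ^ 2 + h ^ 2)) ^ 2
        = (r ^ 2 + h ^ 2) * ((R - r) ^ 2 + h ^ 2) := Real.sq_sqrt hu.le
    have h1 : HasDerivAt (fun x : ℝ => r ^ 2 + x ^ 2) (2 * h) h := by
      simpa using (hasDerivAt_pow 2 h).const_add (r ^ 2)
    have h2 : HasDerivAt (fun x : ℝ => (R - r) ^ 2 + x ^ 2) (2 * h) h := by
      simpa using (hasDerivAt_pow 2 h).const_add ((R - r) ^ 2)
    have hU : HasDerivAt (fun x : ℝ => (r ^ 2 + x ^ 2) * ((R - r) ^ 2 + x ^ 2))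
        (2 * h * ((R - r) ^ 2 + h ^ 2) + (r ^ 2 + h ^ 2) * (2 * h)) h := h1.mul h2
    have hS := hU.sqrt (ne_of_gt hu)
    have hN : HasDerivAt (fun x : ℝ => r ^ 2 - R * r + x ^ 2) (2 * h) h := by
      simpa using (hasDerivAt_pow 2 h).const_add (r ^ 2 - R * r)
    have hF : HasDerivAt (fun x : ℝ => 1 + (r ^ 2 - R * r + x ^ 2)
        / Real.sqrt ((r ^ 2 + x ^ 2) * ((R - r) ^ 2 + x ^ 2))) _ h :=
      (hN.div hS (ne_of_gt hs)).const_add 1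
    rw [hF.deriv]
    set s := Real.sqrt ((r ^ 2 + h ^ 2) * ((R - r) ^ 2 + h ^ 2)) with hsdef
    have key : (2 * h * s - (r ^ 2 - R * r + h ^ 2) *
        ((2 * h * ((R - r) ^ 2 + h ^ 2) + (r ^ 2 + h ^ 2) * (2 * h)) / (2 * s))) / s ^ 2
        = h * (R ^ 2 * (h ^ 2 + r * (R - r))) / s ^ 3 := by
      field_simp
      linear_combination 2 * hs2
    rw [key]
    have hab : 0 ≤ r * (R - r) := mul_nonneg hr0 (by linarith)
    positivity
end

section
/- Let R > 0, 0 ≤ r ≤ R, h_t ≥ 0, h_r ≥ 0, h > max(h_t, h_r), and let q_u ≥ 1 be a real number. Define F : [0, ∞) → ℝ by F(l) = ( 1 + ((h − h_t)·(h − h_r) − √((r² + l²)·((R − r)² + l²))) / √((r² + l² + (h − h_t)²)·((R − r)² + l² + (h − h_r)²)) )^{q_u} / ((r² + l² + (h − h_t)²)·((R − r)² + l² + (h − h_r)²)). Then F is strictly decreasing on [0, ∞). -/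
open Real

lemma aux_base_pos (a b p q u : ℝ) (ha : 0 < a) (hb : 0 < b)
    (hp : 0 ≤ p) (hq : 0 ≤ q) (hu : 0 ≤ u) :
    0 < 1 + (a * b - Real.sqrt ((p + u) * (q + u)))
        / Real.sqrt ((p + u + a ^ 2) * (q + u + b ^ 2)) := by
  have hT : 0 < Real.sqrt ((p + u + a ^ 2) * (q + u + b ^ 2)) :=
    Real.sqrt_pos.mpr (by positivity)
  have hS : Real.sqrt ((p + u) * (q + u)) <
      Real.sqrt ((p + u + a ^ 2) * (q + u + b ^ 2)) := by
    apply Real.sqrt_lt_sqrt (by positivity)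
    nlinarith [mul_pos (pow_pos ha 2) (pow_pos hb 2),
      mul_nonneg (add_nonneg hp hu) (pow_pos hb 2).le,
      mul_nonneg (pow_pos ha 2).le (add_nonneg hq hu)]
  have h2 : 0 < (Real.sqrt ((p + u + a ^ 2) * (q + u + b ^ 2)) +
      (a * b - Real.sqrt ((p + u) * (q + u)))) /
      Real.sqrt ((p + u + a ^ 2) * (q + u + b ^ 2)) :=
    div_pos (by nlinarith [mul_pos ha hb]) hT
  rwa [add_div, div_self hT.ne'] at h2

lemma aux_base_mono (a b p q u v : ℝ) (ha : 0 < a) (hb : 0 < b)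
    (hp : 0 ≤ p) (hq : 0 ≤ q) (hu : 0 ≤ u) (huv : u ≤ v) :
    1 + (a * b - Real.sqrt ((p + v) * (q + v)))
        / Real.sqrt ((p + v + a ^ 2) * (q + v + b ^ 2)) ≤
    1 + (a * b - Real.sqrt ((p + u) * (q + u)))
        / Real.sqrt ((p + u + a ^ 2) * (q + u + b ^ 2)) := by
  have hv : 0 ≤ v := hu.trans huv
  have e1 : ∀ w, 0 ≤ w →
      (a * b - Real.sqrt ((p + w) * (q + w)))
        / Real.sqrt ((p + w + a ^ 2) * (q + w + b ^ 2)) =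
      a / Real.sqrt (p + w + a ^ 2) * (b / Real.sqrt (q + w + b ^ 2)) -
      Real.sqrt (p + w) / Real.sqrt (p + w + a ^ 2) *
        (Real.sqrt (q + w) / Real.sqrt (q + w + b ^ 2)) := by
    intro w hw
    have h1 : 0 < Real.sqrt (p + w + a ^ 2) := Real.sqrt_pos.mpr (by positivity)
    have h2 : 0 < Real.sqrt (q + w + b ^ 2) := Real.sqrt_pos.mpr (by positivity)
    rw [Real.sqrt_mul (by positivity), Real.sqrt_mul (by positivity)]
    field_simp
  rw [e1 u hu, e1 v hv]
  have sA : a / Real.sqrt (p + v + a ^ 2) ≤ a / Real.sqrt (p + u + a ^ 2) := by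
    gcongr

  have sB : b / Real.sqrt (q + v + b ^ 2) ≤ b / Real.sqrt (q + u + b ^ 2) := by
    gcongr

  have cA : Real.sqrt (p + u) / Real.sqrt (p + u + a ^ 2) ≤
      Real.sqrt (p + v) / Real.sqrt (p + v + a ^ 2) := by
    rw [div_le_div_iff₀ (Real.sqrt_pos.mpr (by positivity))
      (Real.sqrt_pos.mpr (by positivity)),
      ← Real.sqrt_mul (by positivity), ← Real.sqrt_mul (by positivity)]
    apply Real.sqrt_le_sqrt
    nlinarith [sq_nonneg a, mul_le_mul_of_nonneg_right huv (sq_nonneg a)]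
  have cB : Real.sqrt (q + u) / Real.sqrt (q + u + b ^ 2) ≤
      Real.sqrt (q + v) / Real.sqrt (q + v + b ^ 2) := by
    rw [div_le_div_iff₀ (Real.sqrt_pos.mpr (by positivity))
      (Real.sqrt_pos.mpr (by positivity)),
      ← Real.sqrt_mul (by positivity), ← Real.sqrt_mul (by positivity)]
    apply Real.sqrt_le_sqrt
    nlinarith [sq_nonneg b, mul_le_mul_of_nonneg_right huv (sq_nonneg b)]
  have m1 : a / Real.sqrt (p + v + a ^ 2) * (b / Real.sqrt (q + v + b ^ 2)) ≤
      a / Real.sqrt (p + u + a ^ 2) * (b / Real.sqrt (q + u + b ^ 2)) :=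
    mul_le_mul sA sB (by positivity) (by positivity)
  have m2 : Real.sqrt (p + u) / Real.sqrt (p + u + a ^ 2) *
      (Real.sqrt (q + u) / Real.sqrt (q + u + b ^ 2)) ≤
      Real.sqrt (p + v) / Real.sqrt (p + v + a ^ 2) *
      (Real.sqrt (q + v) / Real.sqrt (q + v + b ^ 2)) :=
    mul_le_mul cA cB (by positivity) (by positivity)
  linarith
/-- Corollary 3 of the paper: the rotation-optimized composite channel gain
(up to a positive constant)
`F(l) = (1 + ((h−h_t)(h−h_r) − √((r²+l²)((R−r)²+l²)))
          /√((r²+l²+(h−h_t)²)((R−r)²+l²+(h−h_r)²)))^{q_u}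
        /((r²+l²+(h−h_t)²)((R−r)²+l²+(h−h_r)²))`
is strictly decreasing in the horizontal offset `l` on `[0, ∞)`. -/
theorem ccg_strictAnti_in_l
    (R r ht hr h qu : ℝ) (hR : 0 < R) (hr0 : 0 ≤ r) (hrR : r ≤ R)
    (hht : 0 ≤ ht) (hhr : 0 ≤ hr) (hh : max ht hr < h) (hqu : 1 ≤ qu) :
    StrictAntiOn
      (fun l : ℝ =>
        (1 + ((h - ht) * (h - hr)
              - Real.sqrt ((r ^ 2 + l ^ 2) * ((R - r) ^ 2 + l ^ 2)))
            / Real.sqrt ((r ^ 2 + l ^ 2 + (h - ht) ^ 2)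
                * ((R - r) ^ 2 + l ^ 2 + (h - hr) ^ 2))) ^ qu
          / ((r ^ 2 + l ^ 2 + (h - ht) ^ 2)
              * ((R - r) ^ 2 + l ^ 2 + (h - hr) ^ 2)))
      (Set.Ici 0) := by
  intro l1 hl1 l2 hl2 h12
  simp only [Set.mem_Ici] at hl1 hl2
  have ha : 0 < h - ht := sub_pos.mpr ((le_max_left ht hr).trans_lt hh)
  have hb : 0 < h - hr := sub_pos.mpr ((le_max_right ht hr).trans_lt hh)
  have hu : l1 ^ 2 < l2 ^ 2 := by nlinarith
  have hmono := aux_base_mono (h - ht) (h - hr) (r ^ 2) ((R - r) ^ 2)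
    (l1 ^ 2) (l2 ^ 2) ha hb (by positivity) (by positivity) (by positivity) hu.le
  have hpos2 := aux_base_pos (h - ht) (h - hr) (r ^ 2) ((R - r) ^ 2)
    (l2 ^ 2) ha hb (by positivity) (by positivity) (by positivity)
  have hN : (1 + ((h - ht) * (h - hr)
        - Real.sqrt ((r ^ 2 + l2 ^ 2) * ((R - r) ^ 2 + l2 ^ 2)))
      / Real.sqrt ((r ^ 2 + l2 ^ 2 + (h - ht) ^ 2)
          * ((R - r) ^ 2 + l2 ^ 2 + (h - hr) ^ 2))) ^ qu ≤
      (1 + ((h - ht) * (h - hr)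
        - Real.sqrt ((r ^ 2 + l1 ^ 2) * ((R - r) ^ 2 + l1 ^ 2)))
      / Real.sqrt ((r ^ 2 + l1 ^ 2 + (h - ht) ^ 2)
          * ((R - r) ^ 2 + l1 ^ 2 + (h - hr) ^ 2))) ^ qu :=
    Real.rpow_le_rpow hpos2.le hmono (by linarith)
  have hNpos : 0 < (1 + ((h - ht) * (h - hr)
        - Real.sqrt ((r ^ 2 + l2 ^ 2) * ((R - r) ^ 2 + l2 ^ 2)))
      / Real.sqrt ((r ^ 2 + l2 ^ 2 + (h - ht) ^ 2)
          * ((R - r) ^ 2 + l2 ^ 2 + (h - hr) ^ 2))) ^ qu :=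
    Real.rpow_pos_of_pos hpos2 qu
  have hD1 : 0 < (r ^ 2 + l1 ^ 2 + (h - ht) ^ 2)
      * ((R - r) ^ 2 + l1 ^ 2 + (h - hr) ^ 2) := by positivity
  have hD : (r ^ 2 + l1 ^ 2 + (h - ht) ^ 2)
      * ((R - r) ^ 2 + l1 ^ 2 + (h - hr) ^ 2) <
      (r ^ 2 + l2 ^ 2 + (h - ht) ^ 2)
      * ((R - r) ^ 2 + l2 ^ 2 + (h - hr) ^ 2) := by
    nlinarith [sq_nonneg r, sq_nonneg (R - r), sq_nonneg (h - ht),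
      sq_nonneg (h - hr), sq_nonneg l1, sq_nonneg l2]
  calc (1 + ((h - ht) * (h - hr)
        - Real.sqrt ((r ^ 2 + l2 ^ 2) * ((R - r) ^ 2 + l2 ^ 2)))
      / Real.sqrt ((r ^ 2 + l2 ^ 2 + (h - ht) ^ 2)
          * ((R - r) ^ 2 + l2 ^ 2 + (h - hr) ^ 2))) ^ qu
      / ((r ^ 2 + l2 ^ 2 + (h - ht) ^ 2)
          * ((R - r) ^ 2 + l2 ^ 2 + (h - hr) ^ 2))
      < (1 + ((h - ht) * (h - hr)
        - Real.sqrt ((r ^ 2 + l2 ^ 2) * ((R - r) ^ 2 + l2 ^ 2)))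
      / Real.sqrt ((r ^ 2 + l2 ^ 2 + (h - ht) ^ 2)
          * ((R - r) ^ 2 + l2 ^ 2 + (h - hr) ^ 2))) ^ qu
      / ((r ^ 2 + l1 ^ 2 + (h - ht) ^ 2)
          * ((R - r) ^ 2 + l1 ^ 2 + (h - hr) ^ 2)) := by
        exact div_lt_div_of_pos_left hNpos hD1 hD
    _ ≤ (1 + ((h - ht) * (h - hr)
        - Real.sqrt ((r ^ 2 + l1 ^ 2) * ((R - r) ^ 2 + l1 ^ 2)))
      / Real.sqrt ((r ^ 2 + l1 ^ 2 + (h - ht) ^ 2)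
          * ((R - r) ^ 2 + l1 ^ 2 + (h - hr) ^ 2))) ^ qu
      / ((r ^ 2 + l1 ^ 2 + (h - ht) ^ 2)
          * ((R - r) ^ 2 + l1 ^ 2 + (h - hr) ^ 2)) := by
        apply div_le_div_of_nonneg_right hN hD1.le
end
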